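/- (Proposition 1: Vandermonde integral over the ball of radius R) For every positive integer n and every R > 0, ∫_{{x ∈ ℝ^n : ∑_i x_i^2 ≤ R²}} Δ(x)^2 dx_1⋯dx_n = R^{n²} · [1/Γ(n²/2 + 1)] · (2π)^{n/2} · 2^{-n²/2} · ∏_{j=1}^n Γ(1+j). -/

import Mathlib

open MeasureTheory Real Finset

/-- The Vandermonde product `Δ(x) = ∏_{i<j} (x_i - x_j)`. -/
noncomputable def vandermonde {n : ℕ} (x : Fin n → ℝ) : ℝ :=
  ∏ i : Fin n, ∏ j ∈ Finset.Ioi i, (x i - x j)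

open Polynomial

noncomputable def gauss (x : ℝ) : ℝ := Real.exp (-(x ^ 2 / 2))

/-- Real-coefficient probabilists' Hermite polynomial. -/
noncomputable def Her (k : ℕ) : ℝ[X] := (Polynomial.hermite k).map (Int.castRingHom ℝ)

lemma Her_monic (k : ℕ) : (Her k).Monic :=
  (hermite_monic k).map _

lemma Her_natDegree (k : ℕ) : (Her k).natDegree = k := by
  rw [Her, (hermite_monic k).natDegree_map, natDegree_hermite]

lemma Her_zero : Her 0 = 1 := by
  simp [Her, hermite_zero]

lemma Her_succ (k : ℕ) : Her (k + 1) = X * Her k - derivative (Her k) := by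
  rw [Her, hermite_succ]
  simp [Polynomial.map_mul, Polynomial.derivative_map, Her]

lemma continuous_gauss : Continuous gauss := by
  unfold gauss; fun_prop

lemma integrable_abs_pow_gauss (k : ℕ) :
    Integrable (fun x : ℝ => |x| ^ k * gauss x) := by
  have hf : IntegrableOn (fun x : ℝ => |x| ^ k * gauss x) (Set.Ioi 0) := by
    have h := integrableOn_rpow_mul_exp_neg_mul_sq (b := 1/2) (by norm_num)
      (s := (k : ℝ)) ((by norm_num : (-1:ℝ) < 0).trans_le (Nat.cast_nonneg k))
    refine h.congr_fun (fun x hx => ?_) measurableSet_Ioi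
    beta_reduce
    rw [Real.rpow_natCast, abs_of_pos (by exact hx)]
    unfold gauss
    ring_nf
  have int_Iic : IntegrableOn (fun x : ℝ => |x| ^ k * gauss x) (Set.Iic 0) := by
    rw [← Measure.map_neg_eq_self (volume : Measure ℝ)]
    have m : MeasurableEmbedding fun x : ℝ => -x := (Homeomorph.neg ℝ).measurableEmbedding
    rw [m.integrableOn_map_iff]
    simp_rw [Function.comp_def, abs_neg, Set.neg_preimage, Set.neg_Iic, neg_zero]
    simp only [show ∀ x : ℝ, gauss (-x) = gauss x from fun x => by unfold gauss; ring_nf]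
    exact (integrableOn_Ici_iff_integrableOn_Ioi).mpr hf
  have h2 : IntegrableOn (fun x : ℝ => |x| ^ k * gauss x) (Set.Iic 0 ∪ Set.Ioi 0) :=
    int_Iic.union hf
  rw [Set.Iic_union_Ioi] at h2
  rwa [integrableOn_univ] at h2

lemma integrable_pow_gauss (k : ℕ) :
    Integrable (fun x : ℝ => x ^ k * gauss x) := by
  refine (integrable_abs_pow_gauss k).mono ?_ (ae_of_all _ fun x => ?_)
  · exact ((continuous_pow k).mul continuous_gauss).aestronglyMeasurable
  · simp only [norm_mul, norm_pow, Real.norm_eq_abs, abs_abs]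
    exact le_rfl

lemma integrable_poly_gauss (P : Polynomial ℝ) :
    Integrable (fun x : ℝ => P.eval x * gauss x) := by
  have : (fun x : ℝ => P.eval x * gauss x)
      = fun x => ∑ k ∈ Finset.range (P.natDegree + 1),
          P.coeff k * (x ^ k * gauss x) := by
    funext x
    rw [Polynomial.eval_eq_sum_range, Finset.sum_mul]
    congr 1; funext k; ring
  rw [this]
  exact integrable_finset_sum _ fun k _ => ((integrable_pow_gauss k).const_mul _)

noncomputable def HG (k : ℕ) (x : ℝ) : ℝ := (-1 : ℝ) ^ k * ((Her k).eval x * gauss x)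

lemma hasDerivAt_gauss (x : ℝ) : HasDerivAt gauss (-x * gauss x) x := by
  have h : HasDerivAt (fun x : ℝ => -(x ^ 2 / 2)) (-x) x := by
    have := ((hasDerivAt_pow 2 x).div_const 2).neg
    refine this.congr_deriv ?_
    norm_num
  have := h.exp
  refine this.congr_deriv ?_
  unfold gauss; ring

lemma hasDerivAt_HG (k : ℕ) (x : ℝ) : HasDerivAt (HG k) (HG (k + 1) x) x := by
  have h1 : HasDerivAt (fun x => (Her k).eval x * gauss x)
      (-((Her (k+1)).eval x) * gauss x) x := by
    have := ((Her k).hasDerivAt x).mul (hasDerivAt_gauss x)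
    refine this.congr_deriv ?_
    rw [Her_succ]
    simp only [Polynomial.eval_sub, Polynomial.eval_mul, Polynomial.eval_X]
    ring
  have h2 := h1.const_mul ((-1 : ℝ) ^ k)
  have e1 : HG k = fun x => (-1 : ℝ) ^ k * ((Her k).eval x * gauss x) := rfl
  rw [e1]
  refine h2.congr_deriv ?_
  unfold HG
  rw [pow_succ]
  ring

lemma integrable_poly_HG (Q : ℝ[X]) (m : ℕ) :
    Integrable (fun x : ℝ => Q.eval x * HG m x) := by
  have : (fun x : ℝ => Q.eval x * HG m x)
      = fun x => (-1 : ℝ) ^ m * ((Q * Her m).eval x * gauss x) := by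
    funext x; unfold HG; rw [Polynomial.eval_mul]; ring
  rw [this]
  exact (integrable_poly_gauss _).const_mul _

lemma ibp_step (P : ℝ[X]) (k : ℕ) :
    ∫ x : ℝ, P.eval x * HG (k + 1) x = - ∫ x : ℝ, (derivative P).eval x * HG k x := by
  exact integral_mul_deriv_eq_deriv_mul_of_integrable
    (u := fun x => P.eval x) (v := HG k)
    (u' := fun x => (derivative P).eval x) (v' := HG (k+1))
    (fun x _ => P.hasDerivAt x) (fun x _ => hasDerivAt_HG k x)
    (by simpa [Pi.mul_def] using integrable_poly_HG P (k+1))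
    (by simpa [Pi.mul_def] using integrable_poly_HG (derivative P) k)
    (by simpa [Pi.mul_def] using integrable_poly_HG P k)

lemma ortho_aux (k : ℕ) : ∀ P : ℝ[X],
    ∫ x : ℝ, P.eval x * HG k x
      = (-1 : ℝ) ^ k * ∫ x : ℝ, (derivative^[k] P).eval x * gauss x := by
  induction k with
  | zero =>
      intro P
      simp only [Function.iterate_zero_apply, pow_zero, one_mul]
      unfold HG
      congr 1; funext x; simp [Her_zero]
  | succ k ih =>
      intro P
      rw [ibp_step P k, ih (derivative P), Function.iterate_succ_apply, pow_succ]
      ring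

lemma integral_gauss : ∫ x : ℝ, gauss x = Real.sqrt (2 * π) := by
  have : (fun x : ℝ => gauss x) = fun x : ℝ => Real.exp (-(1/2 : ℝ) * x ^ 2) := by
    funext x; unfold gauss; ring_nf
  rw [this, integral_gaussian]
  rw [show π / (1/2) = 2 * π by ring]

lemma hermite_ortho (j k : ℕ) :
    ∫ x : ℝ, (Her j).eval x * (Her k).eval x * gauss x
      = if j = k then (j.factorial : ℝ) * Real.sqrt (2 * π) else 0 := by
  have main : ∀ j k : ℕ, j ≤ k →
      ∫ x : ℝ, (Her j).eval x * (Her k).eval x * gauss x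
        = if j = k then (j.factorial : ℝ) * Real.sqrt (2 * π) else 0 := by
    intro j k hjk
    have h1 : (fun x : ℝ => (Her j).eval x * (Her k).eval x * gauss x)
        = fun x => (-1 : ℝ) ^ k * ((Her j).eval x * HG k x) := by
      funext x; unfold HG
      rw [show ∀ a b c : ℝ, (-1:ℝ)^k * (a * ((-1:ℝ)^k * (b * c))) = ((-1:ℝ)^k * (-1:ℝ)^k) * (a * b * c) from fun a b c => by ring]
      rw [← pow_add, Even.neg_one_pow ⟨k, by ring⟩, one_mul]
    rw [h1, integral_const_mul, ortho_aux k (Her j)]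
    rw [← mul_assoc, ← pow_add, Even.neg_one_pow ⟨k, by ring⟩, one_mul]
    rcases lt_or_eq_of_le hjk with h | h
    · rw [Polynomial.iterate_derivative_eq_zero (by simpa [Her_natDegree] using h)]
      simp [h.ne]
    · subst h
      have hd : derivative^[j] (Her j) = Polynomial.C (j.factorial : ℝ) := by
        have hdeg : (derivative^[j] (Her j)).natDegree = 0 := by
          have := Polynomial.natDegree_iterate_derivative (Her j) j
          rw [Her_natDegree] at this
          omega
        rw [Polynomial.eq_C_of_natDegree_eq_zero hdeg]
        congr 1
        rw [Polynomial.coeff_iterate_derivative]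
        have : (Her j).coeff (0 + j) = 1 := by
          have := (Her_monic j).leadingCoeff
          rwa [Polynomial.leadingCoeff, Her_natDegree, zero_add] at *
        rw [this]
        simp [Nat.descFactorial_self]
      rw [hd]
      simp only [Polynomial.eval_C, if_pos rfl]
      rw [integral_const_mul, integral_gauss]
      simp
  rcases le_total j k with h | h
  · exact main j k h
  · have h2 := main k j h
    have hsym : (fun x : ℝ => (Her j).eval x * (Her k).eval x * gauss x)
        = fun x : ℝ => (Her k).eval x * (Her j).eval x * gauss x := by
      funext x; ring
    rw [hsym, h2]
    rcases eq_or_ne j k with rfl | hne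
    · simp
    · simp [hne, Ne.symm hne]

section Mehta
variable {n : ℕ}

/-- sign of a permutation as a real number -/
noncomputable def sgn (σ : Equiv.Perm (Fin n)) : ℝ := ((Equiv.Perm.sign σ : ℤ) : ℝ)

lemma sgn_sq (σ : Equiv.Perm (Fin n)) : sgn σ * sgn σ = 1 := by
  unfold sgn
  rw [← Int.cast_mul, ← Units.val_mul, Int.units_mul_self]
  norm_num

/-- the one-variable factor -/
noncomputable def fac (σ τ : Equiv.Perm (Fin n)) (i : Fin n) (t : ℝ) : ℝ :=
  (Her (σ.symm i : ℕ)).eval t * (Her (τ.symm i : ℕ)).eval t * gauss t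

lemma integrable_fac (σ τ : Equiv.Perm (Fin n)) (i : Fin n) :
    Integrable (fac σ τ i) := by
  have : fac σ τ i = fun t => (Her (σ.symm i : ℕ) * Her (τ.symm i : ℕ)).eval t * gauss t := by
    funext t; unfold fac; rw [Polynomial.eval_mul]
  rw [this]; exact integrable_poly_gauss _

/-- pointwise expansion of the squared Hermite determinant times the Gaussian weight -/
lemma det_sq_expand (x : Fin n → ℝ) :
    (Matrix.det (Matrix.of fun i j : Fin n => (Her (j : ℕ)).eval (x i))) ^ 2 * ∏ i, gauss (x i)
      = ∑ σ : Equiv.Perm (Fin n), ∑ τ : Equiv.Perm (Fin n),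
          (sgn σ * sgn τ) * ∏ i : Fin n, fac σ τ i (x i) := by
  rw [Matrix.det_apply]
  have hsmul : ∀ σ : Equiv.Perm (Fin n),
      (Equiv.Perm.sign σ • ∏ i, (Matrix.of fun i j : Fin n => (Her (j : ℕ)).eval (x i)) (σ i) i)
        = sgn σ * ∏ i : Fin n, (Her (σ.symm i : ℕ)).eval (x i) := by
    intro σ
    rw [Units.smul_def, zsmul_eq_mul]
    congr 1
    rw [← Equiv.prod_comp σ (fun i => (Her (σ.symm i : ℕ)).eval (x i))]
    simp [Equiv.symm_apply_apply]
  simp_rw [hsmul]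
  rw [sq, Finset.sum_mul_sum, Finset.sum_mul]
  congr 1; funext σ
  rw [Finset.sum_mul]
  congr 1; funext τ
  unfold fac
  rw [Finset.prod_mul_distrib, Finset.prod_mul_distrib]
  ring

lemma integral_prod_fac (σ τ : Equiv.Perm (Fin n)) :
    ∫ x : Fin n → ℝ, ∏ i : Fin n, fac σ τ i (x i)
      = if σ = τ then Real.sqrt (2 * π) ^ n * ∏ k : Fin n, ((k : ℕ).factorial : ℝ) else 0 := by
  rw [MeasureTheory.integral_fintype_prod_volume_eq_prod (f := fun i t => fac σ τ i t)]
  have hval : ∀ i : Fin n, ∫ t, fac σ τ i t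
      = if (σ.symm i : ℕ) = (τ.symm i : ℕ) then (((σ.symm i : ℕ)).factorial : ℝ) * Real.sqrt (2 * π) else 0 := by
    intro i; unfold fac; exact hermite_ortho _ _
  simp_rw [hval]
  by_cases h : σ = τ
  · subst h
    simp only [eq_self_iff_true, if_true]
    rw [Finset.prod_mul_distrib, Finset.prod_const, Finset.card_univ, Fintype.card_fin, mul_comm]
    congr 1
    exact Equiv.prod_comp σ.symm (fun k : Fin n => ((k : ℕ).factorial : ℝ))
  · rw [if_neg h]
    have : ∃ i : Fin n, σ.symm i ≠ τ.symm i := by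
      by_contra hc
      push_neg at hc
      apply h
      have : σ.symm = τ.symm := Equiv.ext hc
      calc σ = (σ.symm).symm := rfl
        _ = (τ.symm).symm := by rw [this]
        _ = τ := rfl
    obtain ⟨i, hi⟩ := this
    apply Finset.prod_eq_zero (Finset.mem_univ i)
    rw [if_neg]
    exact fun hc => hi (Fin.ext hc)

lemma integrable_term (σ τ : Equiv.Perm (Fin n)) :
    Integrable (fun x : Fin n → ℝ => (sgn σ * sgn τ) * ∏ i : Fin n, fac σ τ i (x i)) :=
  (Integrable.fintype_prod_dep (fun i => integrable_fac σ τ i)).const_mul _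

lemma vandermonde_sq_eq_det_sq (x : Fin n → ℝ) :
    vandermonde x ^ 2
      = (Matrix.det (Matrix.of fun i j : Fin n => (Her (j : ℕ)).eval (x i))) ^ 2 := by
  rw [← Matrix.det_eval_matrixOfPolynomials_eq_det_vandermonde x (fun i => Her (i : ℕ))
      (fun i => Her_natDegree i) (fun i => Her_monic i)]
  rw [Matrix.det_vandermonde]
  unfold vandermonde
  rw [← Finset.prod_pow, ← Finset.prod_pow]
  congr 1; funext i
  rw [← Finset.prod_pow, ← Finset.prod_pow]
  refine Finset.prod_congr rfl fun j _ => by ring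

lemma mehta_eq :
    (fun x : Fin n → ℝ => vandermonde x ^ 2 * ∏ i, gauss (x i))
      = fun x => ∑ σ : Equiv.Perm (Fin n), ∑ τ : Equiv.Perm (Fin n),
          (sgn σ * sgn τ) * ∏ i : Fin n, fac σ τ i (x i) := by
  funext x
  rw [vandermonde_sq_eq_det_sq, det_sq_expand]

lemma mehta_integrable :
    Integrable (fun x : Fin n → ℝ => vandermonde x ^ 2 * ∏ i, gauss (x i)) := by
  rw [mehta_eq]
  exact integrable_finset_sum _ fun σ _ => integrable_finset_sum _ fun τ _ => integrable_term σ τ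

lemma mehta_value :
    ∫ x : Fin n → ℝ, vandermonde x ^ 2 * ∏ i, gauss (x i)
      = (n.factorial : ℝ) * Real.sqrt (2 * π) ^ n * ∏ k : Fin n, ((k : ℕ).factorial : ℝ) := by
  rw [mehta_eq]
  rw [integral_finset_sum _ fun σ _ => integrable_finset_sum _ fun τ _ => integrable_term σ τ]
  have : ∀ σ : Equiv.Perm (Fin n),
      ∫ x : Fin n → ℝ, ∑ τ : Equiv.Perm (Fin n), (sgn σ * sgn τ) * ∏ i : Fin n, fac σ τ i (x i)
        = Real.sqrt (2 * π) ^ n * ∏ k : Fin n, ((k : ℕ).factorial : ℝ) := by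
    intro σ
    rw [integral_finset_sum _ fun τ _ => integrable_term σ τ]
    have hτ : ∀ τ : Equiv.Perm (Fin n),
        ∫ x : Fin n → ℝ, (sgn σ * sgn τ) * ∏ i : Fin n, fac σ τ i (x i)
          = (sgn σ * sgn τ) * if σ = τ then Real.sqrt (2 * π) ^ n * ∏ k : Fin n, ((k : ℕ).factorial : ℝ) else 0 := by
      intro τ
      rw [integral_const_mul, integral_prod_fac]
    simp_rw [hτ]
    rw [Finset.sum_eq_single σ]
    · rw [if_pos rfl, sgn_sq, one_mul]
    · intro τ _ hτne
      rw [if_neg (Ne.symm hτne), mul_zero]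
    · intro h; exact absurd (Finset.mem_univ σ) h
  simp_rw [this]
  rw [Finset.sum_const, Finset.card_univ, Fintype.card_perm, Fintype.card_fin]
  rw [nsmul_eq_mul, mul_assoc]

end Mehta

section Part3
variable {n : ℕ}

def Sq (x : Fin n → ℝ) : ℝ := ∑ i, (x i) ^ 2

lemma Sq_nonneg (x : Fin n → ℝ) : 0 ≤ Sq x := Finset.sum_nonneg fun i _ => sq_nonneg _

lemma continuous_Sq : Continuous (Sq (n := n)) := by
  unfold Sq
  exact continuous_finset_sum _ fun i _ => (continuous_apply i).pow 2

lemma continuous_vandermonde : Continuous (vandermonde (n := n)) := by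
  unfold vandermonde
  exact continuous_finset_prod _ fun i _ => continuous_finset_prod _ fun j _ =>
    ((continuous_apply i).sub (continuous_apply j) : Continuous fun x : Fin n → ℝ => x i - x j)

def A (n : ℕ) (t : ℝ) : Set (Fin n → ℝ) := {x | Sq x ≤ t ^ 2}

lemma measurableSet_A (t : ℝ) : MeasurableSet (A n t) :=
  (isClosed_le continuous_Sq continuous_const).measurableSet

lemma isCompact_A (t : ℝ) : IsCompact (A n t) := by
  refine (isCompact_closedBall (0 : Fin n → ℝ) |t|).of_isClosed_subset
    (isClosed_le continuous_Sq continuous_const) (fun x hx => ?_)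
  rw [Metric.mem_closedBall, dist_zero_right]
  rcases Nat.eq_zero_or_pos n with rfl | hn
  · have hx0 : x = 0 := Subsingleton.elim x 0
    rw [hx0, norm_zero]
    exact abs_nonneg t
  · rw [pi_norm_le_iff_of_nonneg (abs_nonneg t)]
    intro i
    have h1 : (x i) ^ 2 ≤ t ^ 2 := by
      refine le_trans ?_ hx
      exact Finset.single_le_sum (fun j _ => sq_nonneg (x j)) (Finset.mem_univ i)
    have := Real.sqrt_le_sqrt h1
    rwa [Real.sqrt_sq_eq_abs, Real.sqrt_sq_eq_abs] at this

lemma integrableOn_A (t : ℝ) :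
    IntegrableOn (fun x : Fin n → ℝ => vandermonde x ^ 2) (A n t) :=
  ((continuous_vandermonde.pow 2).continuousOn).integrableOn_compact (isCompact_A t)

/-- number of pairs -/
def KK (n : ℕ) : ℕ := ∑ i : Fin n, (Finset.Ioi i).card

lemma KK_eq : KK n * 2 + n = n ^ 2 := by
  have h1 : KK n = ∑ j ∈ Finset.range n, (n - 1 - j) := by
    unfold KK
    rw [← Fin.sum_univ_eq_sum_range (fun j => n - 1 - j) n]
    exact Finset.sum_congr rfl fun i _ => by rw [Fin.card_Ioi]
  have h2 : ∑ j ∈ Finset.range n, (n - 1 - j) = ∑ j ∈ Finset.range n, j :=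
    Finset.sum_range_reflect (fun j => j) n
  have h3 : KK n * 2 = n * (n - 1) := by rw [h1, h2, Finset.sum_range_id_mul_two]
  rw [h3]
  cases n with
  | zero => rfl
  | succ m => rw [Nat.succ_sub_one]; ring

lemma vandermonde_smul (t : ℝ) (x : Fin n → ℝ) :
    vandermonde (t • x) = t ^ KK n * vandermonde x := by
  unfold vandermonde KK
  rw [← Finset.prod_pow_eq_pow_sum, ← Finset.prod_mul_distrib]
  refine Finset.prod_congr rfl fun i _ => ?_
  rw [← Finset.prod_const, ← Finset.prod_mul_distrib]
  refine Finset.prod_congr rfl fun j _ => ?_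
  simp only [Pi.smul_apply, smul_eq_mul]
  ring

lemma Sq_smul (t : ℝ) (x : Fin n → ℝ) : Sq (t • x) = t ^ 2 * Sq x := by
  unfold Sq
  rw [Finset.mul_sum]
  refine Finset.sum_congr rfl fun i _ => ?_
  simp only [Pi.smul_apply, smul_eq_mul]
  ring

lemma mem_A_inv_smul {t : ℝ} (ht : 0 < t) (x : Fin n → ℝ) :
    t⁻¹ • x ∈ A n 1 ↔ x ∈ A n t := by
  have h2 : (0:ℝ) < t ^ 2 := by positivity
  simp only [A, Set.mem_setOf_eq, one_pow, Sq_smul]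
  rw [show (t⁻¹) ^ 2 * Sq x = Sq x / t ^ 2 by field_simp]
  rw [div_le_one h2]

lemma B_scale {t : ℝ} (ht : 0 < t) :
    ∫ x in A n t, vandermonde x ^ 2 = t ^ (n ^ 2) * ∫ x in A n 1, vandermonde x ^ 2 := by
  have dim : Module.finrank ℝ (Fin n → ℝ) = n := by
    rw [Module.finrank_fintype_fun_eq_card, Fintype.card_fin]
  have htne : t ≠ 0 := ht.ne'
  rw [← integral_indicator (measurableSet_A t), ← integral_indicator (measurableSet_A 1)]
  have key : ∀ x : Fin n → ℝ,
      Set.indicator (A n t) (fun x => vandermonde x ^ 2) x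
        = t ^ (KK n * 2) * Set.indicator (A n 1) (fun x => vandermonde x ^ 2) (t⁻¹ • x) := by
    intro x
    by_cases hx : x ∈ A n t
    · rw [Set.indicator_of_mem hx, Set.indicator_of_mem ((mem_A_inv_smul ht x).2 hx)]
      rw [vandermonde_smul, mul_pow]
      simp only [inv_pow, ← pow_mul]
      rw [← mul_assoc, mul_inv_cancel₀ (pow_ne_zero _ htne), one_mul]
    · rw [Set.indicator_of_notMem hx,
        Set.indicator_of_notMem (fun hc => hx ((mem_A_inv_smul ht x).1 hc)), mul_zero]
  simp_rw [key]
  rw [MeasureTheory.integral_const_mul]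
  rw [MeasureTheory.Measure.integral_comp_inv_smul volume
    (Set.indicator (A n 1) fun x => vandermonde x ^ 2) t]
  rw [dim, abs_of_pos (pow_pos ht n), smul_eq_mul, ← mul_assoc, ← pow_add, KK_eq]

lemma B1_nonneg : 0 ≤ ∫ x in A n 1, vandermonde x ^ 2 :=
  setIntegral_nonneg (measurableSet_A 1) fun x _ => sq_nonneg _

lemma tail_gauss (a : ℝ) : ∫ t in Set.Ioi a, t * gauss t = gauss a := by
  have hderiv : ∀ x ∈ Set.Ici a, HasDerivAt (fun t => -gauss t) (x * gauss x) x := by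
    intro x _
    have := (hasDerivAt_gauss x).neg
    refine this.congr_deriv ?_
    ring
  have hint : IntegrableOn (fun t : ℝ => t * gauss t) (Set.Ioi a) := by
    have := (integrable_pow_gauss 1).integrableOn (s := Set.Ioi a)
    simpa [pow_one] using this
  have htend : Filter.Tendsto (fun t : ℝ => -gauss t) Filter.atTop (nhds 0) := by
    have h1 : Filter.Tendsto (fun t : ℝ => t ^ 2 / 2) Filter.atTop Filter.atTop :=
      (Filter.tendsto_pow_atTop (two_ne_zero)).atTop_div_const (by norm_num)
    have h2 : Filter.Tendsto (fun t : ℝ => -(t ^ 2 / 2)) Filter.atTop Filter.atBot :=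
      Filter.tendsto_neg_atTop_atBot.comp h1
    have h3 : Filter.Tendsto gauss Filter.atTop (nhds 0) :=
      Real.tendsto_exp_atBot.comp h2
    simpa using h3.neg
  have h := integral_Ioi_of_hasDerivAt_of_tendsto' hderiv hint htend
  simpa using h

lemma prod_gauss (x : Fin n → ℝ) : ∏ i, gauss (x i) = Real.exp (-(Sq x / 2)) := by
  unfold gauss Sq
  rw [← Real.exp_sum]
  congr 1
  rw [Finset.sum_div, ← Finset.sum_neg_distrib]

noncomputable def Cc (n : ℕ) : ℝ := ∫ t in Set.Ioi (0:ℝ), t ^ (n ^ 2 + 1) * gauss t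

lemma Cc_nonneg : 0 ≤ Cc n := by
  refine setIntegral_nonneg measurableSet_Ioi fun t ht => ?_
  exact mul_nonneg (pow_nonneg (le_of_lt ht) _) (Real.exp_pos _).le

lemma measurable_F : Measurable (fun x : Fin n → ℝ => ENNReal.ofReal (vandermonde x ^ 2)) :=
  ENNReal.measurable_ofReal.comp (continuous_vandermonde.pow 2).measurable

lemma layercake :
    (∫ x : Fin n → ℝ, vandermonde x ^ 2 * ∏ i, gauss (x i))
      = (∫ x in A n 1, vandermonde x ^ 2) * Cc n := by
  set F : (Fin n → ℝ) → ENNReal := fun x => ENNReal.ofReal (vandermonde x ^ 2) with hF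
  set K : Set ((Fin n → ℝ) × ℝ) := {p | Real.sqrt (Sq p.1) ≤ p.2} with hK
  have hKmeas : MeasurableSet K :=
    (isClosed_le ((continuous_Sq.comp continuous_fst).sqrt) continuous_snd).measurableSet
  set f : (Fin n → ℝ) → ℝ → ENNReal :=
    fun x t => F x * ENNReal.ofReal (t * gauss t) * K.indicator 1 (x, t) with hf
  have hfmeas : AEMeasurable (Function.uncurry f)
      ((volume : Measure (Fin n → ℝ)).prod (volume : Measure ℝ)) := by
    refine Measurable.aemeasurable ?_
    have h1 : Measurable fun p : (Fin n → ℝ) × ℝ => F p.1 :=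
      measurable_F.comp measurable_fst
    have h2 : Measurable fun p : (Fin n → ℝ) × ℝ => ENNReal.ofReal (p.2 * gauss p.2) :=
      ENNReal.measurable_ofReal.comp
        (((continuous_id.mul continuous_gauss).measurable).comp measurable_snd)
    have h3 : Measurable (K.indicator (1 : ((Fin n → ℝ) × ℝ) → ENNReal)) :=
      measurable_one.indicator hKmeas
    exact (h1.mul h2).mul h3
  -- step 1 : inner integral over t
  have step1 : ∀ x : Fin n → ℝ,
      ∫⁻ t, f x t = F x * ENNReal.ofReal (Real.exp (-(Sq x / 2))) := by
    intro x
    set a := Real.sqrt (Sq x) with ha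
    have ha0 : 0 ≤ a := Real.sqrt_nonneg _
    have hpt : ∀ t : ℝ, f x t
        = Set.indicator (Set.Ici a) (fun t => F x * ENNReal.ofReal (t * gauss t)) t := by
      intro t
      by_cases h : a ≤ t
      · have hmem : (x, t) ∈ K := h
        rw [Set.indicator_of_mem (Set.mem_Ici.2 h)]
        simp only [hf]
        rw [Set.indicator_of_mem hmem]
        simp
      · have hmem : (x, t) ∉ K := h
        rw [Set.indicator_of_notMem (fun hc => h (Set.mem_Ici.1 hc))]
        simp only [hf]
        rw [Set.indicator_of_notMem hmem]
        simp
    simp_rw [hpt]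
    rw [lintegral_indicator measurableSet_Ici _]
    rw [lintegral_const_mul' _ _ ENNReal.ofReal_ne_top]
    rw [← Measure.restrict_congr_set Ioi_ae_eq_Ici]
    have hint : IntegrableOn (fun t : ℝ => t * gauss t) (Set.Ioi a) := by
      simpa [pow_one] using (integrable_pow_gauss 1).integrableOn (s := Set.Ioi a)
    have hnn : 0 ≤ᵐ[volume.restrict (Set.Ioi a)] fun t : ℝ => t * gauss t := by
      refine (ae_restrict_iff' measurableSet_Ioi).2 (ae_of_all _ fun t ht => ?_)
      have h1 : (0:ℝ) < t := lt_of_le_of_lt ha0 ht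
      have h2 : (0:ℝ) < gauss t := Real.exp_pos _
      positivity
    rw [← ofReal_integral_eq_lintegral_ofReal hint hnn]
    rw [tail_gauss]
    congr 2
    rw [show gauss a = Real.exp (-(a ^ 2 / 2)) from rfl, Real.sq_sqrt (Sq_nonneg x)]
  -- step 2+3 : integral over x for fixed t
  have step23 : ∀ t : ℝ,
      ∫⁻ x, f x t = Set.indicator (Set.Ioi (0:ℝ))
        (fun t => ENNReal.ofReal ((∫ x in A n 1, vandermonde x ^ 2)
          * (t ^ (n ^ 2 + 1) * gauss t))) t := by
    intro t
    have hpt : ∀ x : Fin n → ℝ, f x t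
        = ENNReal.ofReal (t * gauss t) * Set.indicator {x : Fin n → ℝ | Real.sqrt (Sq x) ≤ t} F x := by
      intro x
      by_cases h : Real.sqrt (Sq x) ≤ t
      · have hmem : (x, t) ∈ K := h
        rw [Set.indicator_of_mem (show x ∈ {x : Fin n → ℝ | Real.sqrt (Sq x) ≤ t} from h)]
        simp only [hf]
        rw [Set.indicator_of_mem hmem]
        simp only [Pi.one_apply, mul_one]
        ring
      · have hmem : (x, t) ∉ K := h
        rw [Set.indicator_of_notMem (show x ∉ {x : Fin n → ℝ | Real.sqrt (Sq x) ≤ t} from h)]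
        simp only [hf]
        rw [Set.indicator_of_notMem hmem]
        simp
    simp_rw [hpt]
    rw [lintegral_const_mul' _ _ ENNReal.ofReal_ne_top]
    have hsetmeas : MeasurableSet {x : Fin n → ℝ | Real.sqrt (Sq x) ≤ t} :=
      (isClosed_le continuous_Sq.sqrt continuous_const).measurableSet
    rw [lintegral_indicator hsetmeas _]
    by_cases ht : 0 < t
    · have hset : {x : Fin n → ℝ | Real.sqrt (Sq x) ≤ t} = A n t := by
        ext x
        simp only [Set.mem_setOf_eq, A]
        constructor
        · intro h
          have := pow_le_pow_left₀ (Real.sqrt_nonneg _) h 2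
          rwa [Real.sq_sqrt (Sq_nonneg x)] at this
        · intro h
          have := Real.sqrt_le_sqrt h
          rwa [Real.sqrt_sq ht.le] at this
      rw [hset]
      have hnn : 0 ≤ᵐ[volume.restrict (A n t)] fun x : Fin n → ℝ => vandermonde x ^ 2 :=
        ae_of_all _ fun x => sq_nonneg _
      rw [hF, ← ofReal_integral_eq_lintegral_ofReal (integrableOn_A t) hnn]
      rw [B_scale ht]
      rw [Set.indicator_of_mem (Set.mem_Ioi.2 ht)]
      rw [← ENNReal.ofReal_mul (p := t * gauss t) (mul_nonneg ht.le (Real.exp_pos _).le)]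
      congr 1
      ring
    · have h0 : ENNReal.ofReal (t * gauss t) = 0 := by
        rw [ENNReal.ofReal_eq_zero]
        push_neg at ht
        exact mul_nonpos_of_nonpos_of_nonneg ht (Real.exp_pos _).le
      rw [h0, zero_mul, Set.indicator_of_notMem (fun hc => ht (Set.mem_Ioi.1 hc))]
  -- assemble
  have hMnn : 0 ≤ ∫ x : Fin n → ℝ, vandermonde x ^ 2 * ∏ i, gauss (x i) :=
    integral_nonneg fun x => mul_nonneg (sq_nonneg _)
      (Finset.prod_nonneg fun i _ => (Real.exp_pos _).le)
  have hRnn : 0 ≤ (∫ x in A n 1, vandermonde x ^ 2) * Cc n :=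
    mul_nonneg B1_nonneg Cc_nonneg
  rw [← ENNReal.ofReal_eq_ofReal_iff hMnn hRnn]
  calc ENNReal.ofReal (∫ x : Fin n → ℝ, vandermonde x ^ 2 * ∏ i, gauss (x i))
      = ∫⁻ x : Fin n → ℝ, ENNReal.ofReal (vandermonde x ^ 2 * ∏ i, gauss (x i)) := by
        refine ofReal_integral_eq_lintegral_ofReal mehta_integrable (ae_of_all _ fun x => ?_)
        exact mul_nonneg (sq_nonneg _) (Finset.prod_nonneg fun i _ => (Real.exp_pos _).le)
    _ = ∫⁻ x : Fin n → ℝ, F x * ENNReal.ofReal (Real.exp (-(Sq x / 2))) := by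
        refine lintegral_congr fun x => ?_
        rw [hF, ← ENNReal.ofReal_mul (sq_nonneg _), prod_gauss]
    _ = ∫⁻ x : Fin n → ℝ, ∫⁻ t, f x t := by
        refine lintegral_congr fun x => (step1 x).symm
    _ = ∫⁻ t : ℝ, ∫⁻ x : Fin n → ℝ, f x t := lintegral_lintegral_swap hfmeas
    _ = ∫⁻ t : ℝ, Set.indicator (Set.Ioi (0:ℝ))
          (fun t => ENNReal.ofReal ((∫ x in A n 1, vandermonde x ^ 2)
            * (t ^ (n ^ 2 + 1) * gauss t))) t := lintegral_congr step23
    _ = ∫⁻ t in Set.Ioi (0:ℝ), ENNReal.ofReal ((∫ x in A n 1, vandermonde x ^ 2)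
            * (t ^ (n ^ 2 + 1) * gauss t)) := lintegral_indicator measurableSet_Ioi _
    _ = ENNReal.ofReal (∫ t in Set.Ioi (0:ℝ),
          (∫ x in A n 1, vandermonde x ^ 2) * (t ^ (n ^ 2 + 1) * gauss t)) := by
        refine (ofReal_integral_eq_lintegral_ofReal ?_ ?_).symm
        · exact ((integrable_pow_gauss (n ^ 2 + 1)).integrableOn).const_mul _
        · refine (ae_restrict_iff' measurableSet_Ioi).2 (ae_of_all _ fun t ht => ?_)
          have h1 : (0:ℝ) < t := ht
          have h2 : (0:ℝ) < gauss t := Real.exp_pos _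
          have := B1_nonneg (n := n)
          positivity
    _ = ENNReal.ofReal ((∫ x in A n 1, vandermonde x ^ 2) * Cc n) := by
        rw [MeasureTheory.integral_const_mul]
        rfl

end Part3

section Part4
variable {n : ℕ}

lemma Cc_val (n : ℕ) : Cc n = 2 ^ ((n:ℝ) ^ 2 / 2) * Real.Gamma ((n:ℝ) ^ 2 / 2 + 1) := by
  unfold Cc
  have hcongr : ∀ t ∈ Set.Ioi (0:ℝ),
      t ^ (n ^ 2 + 1) * gauss t = t ^ (((n ^ 2 + 1 : ℕ) : ℝ)) * Real.exp (-(1/2) * t ^ (2:ℝ)) := by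
    intro t ht
    have ht0 : (0:ℝ) < t := ht
    rw [Real.rpow_natCast, Real.rpow_two]
    unfold gauss
    ring_nf
  rw [setIntegral_congr_fun measurableSet_Ioi hcongr]
  rw [integral_rpow_mul_exp_neg_mul_rpow (by norm_num) (lt_of_lt_of_le (by norm_num) (Nat.cast_nonneg _)) (by norm_num)]
  have hq : ((((n ^ 2 + 1 : ℕ) : ℝ)) + 1) / 2 = (n:ℝ) ^ 2 / 2 + 1 := by
    push_cast; ring
  rw [hq]
  congr 1
  have h12 : (1/2 : ℝ) = 2 ^ (-1 : ℝ) := by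
    rw [Real.rpow_neg_one]; norm_num
  rw [h12, ← Real.rpow_mul (by norm_num : (0:ℝ) ≤ 2),
    ← Real.rpow_add (by norm_num : (0:ℝ) < 2)]
  congr 1
  push_cast
  ring

lemma prod_Icc_gamma (n : ℕ) :
    ∏ j ∈ Finset.Icc 1 n, Real.Gamma (1 + (j:ℝ))
      = (n.factorial : ℝ) * ∏ k : Fin n, ((k : ℕ).factorial : ℝ) := by
  have h1 : ∀ j : ℕ, Real.Gamma (1 + (j:ℝ)) = (j.factorial : ℝ) := by
    intro j
    rw [add_comm, Real.Gamma_nat_eq_factorial]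
  simp_rw [h1]
  rw [Fin.prod_univ_eq_prod_range (fun k => ((k).factorial : ℝ))]
  induction n with
  | zero => simp
  | succ m ih =>
      rw [Finset.prod_Icc_succ_top (by omega : 1 ≤ m + 1), ih, Finset.prod_range_succ]
      push_cast
      ring

lemma sqrt_two_pi_pow (n : ℕ) : Real.sqrt (2 * π) ^ n = (2 * π) ^ ((n:ℝ) / 2) := by
  rw [Real.sqrt_eq_rpow, ← Real.rpow_natCast ((2*π) ^ (1/(2:ℝ))), ← Real.rpow_mul (by positivity)]
  congr 1
  ring

/-- **Proposition 1: Vandermonde integral over the ball of radius `R`.** -/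
theorem vandermonde_integral_ball (n : ℕ) (hn : 0 < n) (R : ℝ) (hR : 0 < R) :
    (∫ x in {x : Fin n → ℝ | ∑ i : Fin n, (x i) ^ 2 ≤ R ^ 2}, (vandermonde x) ^ 2) =
      R ^ (n ^ 2) * (1 / Real.Gamma ((n : ℝ) ^ 2 / 2 + 1)) * (2 * π) ^ ((n : ℝ) / 2) *
        2 ^ (-((n : ℝ) ^ 2) / 2) * ∏ j ∈ Finset.Icc 1 n, Real.Gamma (1 + j) := by
  have hA : {x : Fin n → ℝ | ∑ i : Fin n, (x i) ^ 2 ≤ R ^ 2} = A n R := rfl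
  rw [hA, B_scale hR]
  have hGpos : 0 < Real.Gamma ((n:ℝ) ^ 2 / 2 + 1) := Real.Gamma_pos_of_pos (by positivity)
  have h2pos : (0:ℝ) < 2 ^ ((n:ℝ) ^ 2 / 2) := Real.rpow_pos_of_pos (by norm_num) _
  have hCpos : 0 < Cc n := by rw [Cc_val]; positivity
  have hB1 : (∫ x in A n 1, vandermonde x ^ 2)
      = ((n.factorial : ℝ) * Real.sqrt (2 * π) ^ n * ∏ k : Fin n, ((k : ℕ).factorial : ℝ)) / Cc n := by
    rw [eq_div_iff hCpos.ne', ← layercake, mehta_value]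
  rw [hB1, Cc_val, prod_Icc_gamma, sqrt_two_pi_pow]
  have hneg : (2:ℝ) ^ (-((n:ℝ) ^ 2) / 2) = ((2:ℝ) ^ ((n:ℝ) ^ 2 / 2))⁻¹ := by
    rw [← Real.rpow_neg (by norm_num)]
    congr 1
    ring
  rw [hneg]
  field_simp

end Part4
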